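/- Let I be a standard dyadic partition of [0,1]. Then the map A ↦ A ∪ Ā is a bijection from {A ∈ S_R(I) : A ≠ [0,1] and s(A) = +1} onto {B ∈ S(I) : s(B) = −1 and B is not a subinterval of I}. -/

import Mathlib

/-- `IsSD l r` means `[l, r]` is a standard dyadic interval
`[k/2^m, (k+1)/2^m] ⊆ [0,1]` with `m ≥ 0`, `0 ≤ k ≤ 2^m - 1`. -/
def IsSD (l r : ℚ) : Prop :=
  ∃ m k : ℕ, k < 2 ^ m ∧ l = (k : ℚ) / 2 ^ m ∧ r = ((k : ℚ) + 1) / 2 ^ m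

/-- A left standard dyadic interval: `[k/2^m, (k+1)/2^m]` with `m ≥ 1` and `k` even. -/
def IsLeftSD (l r : ℚ) : Prop :=
  ∃ m k : ℕ, 1 ≤ m ∧ k < 2 ^ m ∧ Even k ∧
    l = (k : ℚ) / 2 ^ m ∧ r = ((k : ℚ) + 1) / 2 ^ m

/-- A right standard dyadic interval: `[k/2^m, (k+1)/2^m]` with `m ≥ 1` and `k` odd;
by convention `[0,1]` is also regarded as a right standard dyadic interval. -/
def IsRightSD (l r : ℚ) : Prop :=
  (l = 0 ∧ r = 1) ∨
    ∃ m k : ℕ, 1 ≤ m ∧ k < 2 ^ m ∧ Odd k ∧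
      l = (k : ℚ) / 2 ^ m ∧ r = ((k : ℚ) + 1) / 2 ^ m

/-- The set `S` of all standard dyadic intervals, an interval `[l, r]` being
represented by the pair `(l, r)` of its endpoints. -/
def SDSet : Set (ℚ × ℚ) := {A | IsSD A.1 A.2}

/-- The conjugate `Ā` of a standard dyadic interval `A ≠ [0,1]`:
the adjacent standard dyadic interval of the same length, on the right of `A`
if `A` is left, and on the left of `A` if `A` is right. -/
noncomputable def conjSD (A : ℚ × ℚ) : ℚ × ℚ := by
  classical
  exact if IsLeftSD A.1 A.2 then (A.2, 2 * A.2 - A.1) else (2 * A.1 - A.2, A.1)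

/-- The union of two overlapping or adjacent closed intervals, as an interval:
from the smaller left endpoint to the larger right endpoint.  In particular
`sdJoin A (conjSD A)` represents the interval `A ∪ Ā`. -/
def sdJoin (A B : ℚ × ℚ) : ℚ × ℚ := (min A.1 B.1, max A.2 B.2)

/-- A standard dyadic `n`-partition of `[0,1]`: breakpoints
`0 = a_0 < a_1 < ... < a_n = 1` with every `[a_i, a_{i+1}]` a standard dyadic
interval. -/
structure SDPartition (n : ℕ) where
  pts : Fin (n + 1) → ℚ
  first : pts 0 = 0
  last : pts (Fin.last n) = 1
  mono : StrictMono pts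
  sd : ∀ i : Fin n, IsSD (pts i.castSucc) (pts i.succ)

/-- `S(I)`: the set of intervals `[a_i, a_j]` (`i < j`) with endpoints breakpoints
of `I` that are standard dyadic intervals. -/
def SIn {n : ℕ} (I : SDPartition n) : Set (ℚ × ℚ) :=
  {A | (∃ i j : Fin (n + 1), i < j ∧ A = (I.pts i, I.pts j)) ∧ IsSD A.1 A.2}

/-- The midpoint of an interval. -/
def midQ (A : ℚ × ℚ) : ℚ := (A.1 + A.2) / 2

/-- The length of an interval. -/
def lenQ (A : ℚ × ℚ) : ℚ := A.2 - A.1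

/-- `E`: the set of dyadic rationals strictly between 0 and 1. -/
def Edyadic : Set ℚ := {q | ∃ m k : ℕ, 1 ≤ k ∧ k < 2 ^ m ∧ q = (k : ℚ) / 2 ^ m}

/-- `S_L(I) = S(I) ∩ S_L`. -/
def SLIn {n : ℕ} (I : SDPartition n) : Set (ℚ × ℚ) := {A ∈ SIn I | IsLeftSD A.1 A.2}

/-- `S_R(I) = S(I) ∩ S_R`. -/
def SRIn {n : ℕ} (I : SDPartition n) : Set (ℚ × ℚ) := {A ∈ SIn I | IsRightSD A.1 A.2}

/-- `M(I)`: the set of midpoints of the subintervals of `I`. -/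
def MIn {n : ℕ} (I : SDPartition n) : Set ℚ :=
  {q | ∃ i : Fin n, q = midQ (I.pts i.castSucc, I.pts i.succ)}

/-- `E(I)`: the union of `M(I)` with the breakpoints of `I` other than 0 and 1. -/
def EIn {n : ℕ} (I : SDPartition n) : Set ℚ :=
  MIn I ∪ {q | (∃ i : Fin (n + 1), I.pts i = q) ∧ q ≠ 0 ∧ q ≠ 1}

/-- `SignSpec s` says that `s` takes values in `{+1, -1}` on standard dyadic
intervals, `s([0,1]) = +1`, and for `A ≠ [0,1]`, `s A = s (A ∪ Ā)` if `A` is a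
left interval while `s A = - s (A ∪ Ā)` if `A` is a right interval. -/
def SignSpec (s : ℚ × ℚ → ℤ) : Prop :=
  (∀ A ∈ SDSet, s A = 1 ∨ s A = -1) ∧
  s ((0 : ℚ), (1 : ℚ)) = 1 ∧
  ∀ A ∈ SDSet, A ≠ ((0 : ℚ), (1 : ℚ)) →
    (IsLeftSD A.1 A.2 → s A = s (sdJoin A (conjSD A))) ∧
    (IsRightSD A.1 A.2 → s A = - s (sdJoin A (conjSD A)))

section Aux

-- dyadic arithmetic helpers
lemma dy_lt_iff {a b p q : ℕ} : (a:ℚ)/2^p < (b:ℚ)/2^q ↔ a * 2^q < b * 2^p := by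
  rw [div_lt_div_iff₀ (by positivity) (by positivity)]
  constructor <;> intro h <;> exact_mod_cast h

lemma dy_eq_iff {a b p q : ℕ} : (a:ℚ)/2^p = (b:ℚ)/2^q ↔ a * 2^q = b * 2^p := by
  rw [div_eq_div_iff (by positivity) (by positivity)]
  constructor <;> intro h <;> exact_mod_cast h

/-- Uniqueness of the standard dyadic representation. -/
lemma sd_rep_unique {m k m' k' : ℕ}
    (h1 : (k:ℚ)/2^m = (k':ℚ)/2^m') (h2 : ((k:ℚ)+1)/2^m = ((k':ℚ)+1)/2^m') :
    m = m' ∧ k = k' := by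
  have hp : (0:ℚ) < 2^m := by positivity
  have hp' : (0:ℚ) < 2^m' := by positivity
  have hmm : (2:ℚ)^m = 2^m' := by
    field_simp at h1 h2
    linarith
  have hm : m = m' := by
    have : (2:ℕ)^m = 2^m' := by exact_mod_cast hmm
    exact Nat.pow_right_injective (by norm_num) this
  subst hm
  refine ⟨rfl, ?_⟩
  have : (k:ℚ) = k' := by
    field_simp at h1; exact_mod_cast h1
  exact_mod_cast this

/-- A right s.d. interval other than `[0,1]` is not a left s.d. interval. -/
lemma right_not_left {l r : ℚ} (h : IsRightSD l r) (hne : ¬(l = 0 ∧ r = 1)) :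
    ¬ IsLeftSD l r := by
  rcases h with h | ⟨m, k, _, _, hk, hl, hr⟩
  · exact fun _ => hne h
  · rintro ⟨m', k', _, _, hk', hl', hr'⟩
    obtain ⟨hm, hkk⟩ := sd_rep_unique (hl ▸ hl') (hr ▸ hr')
    subst hm; subst hkk
    exact (Nat.not_even_iff_odd.mpr hk) hk'

namespace SDPartition

variable {n : ℕ} (I : SDPartition n)

lemma pts_nonneg (i : Fin (n+1)) : 0 ≤ I.pts i := by
  rw [← I.first]; exact I.mono.monotone (Fin.zero_le i)

lemma pts_le_one (i : Fin (n+1)) : I.pts i ≤ 1 := by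
  rw [← I.last]; exact I.mono.monotone (Fin.le_last i)

/-- Key lemma: if `k/2^m` with `k` odd is a breakpoint, so is `(k-1)/2^m`,
at a smaller index. -/
lemma pred_breakpoint_aux (N : ℕ) :
    ∀ i : Fin (n+1), i.1 ≤ N → ∀ m k : ℕ, Odd k → I.pts i = (k:ℚ)/2^m →
      ∃ i' : Fin (n+1), i' < i ∧ I.pts i' = ((k:ℚ)-1)/2^m := by
  induction N with
  | zero =>
    intro i hi m k hk hpts
    exfalso
    have hi0 : i = 0 := Fin.ext (Nat.le_zero.mp hi)
    have hkpos : 0 < k := Nat.pos_of_ne_zero (by rintro rfl; simp at hk)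
    have : (0:ℚ) < (k:ℚ)/2^m := by positivity
    rw [← hpts, hi0, I.first] at this
    exact lt_irrefl _ this
  | succ N IH =>
    intro i hi m k hk hpts
    have hkpos : 0 < k := Nat.pos_of_ne_zero (by rintro rfl; simp at hk)
    have hi0 : i ≠ 0 := by
      rintro rfl
      have : (0:ℚ) < (k:ℚ)/2^m := by positivity
      rw [← hpts, I.first] at this
      exact lt_irrefl _ this
    obtain ⟨i₀, rfl⟩ := Fin.eq_succ_of_ne_zero hi0
    obtain ⟨p, j, hjlt, hl, hr⟩ := I.sd i₀
    -- (j+1)/2^p = k/2^m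
    have heq : ((j:ℚ)+1)/2^p = (k:ℚ)/2^m := by rw [← hr, ← hpts]
    have heqn : (j+1) * 2^m = k * 2^p := by
      have : ((j+1 : ℕ):ℚ)/2^p = (k:ℚ)/2^m := by push_cast; exact heq
      exact dy_eq_iff.mp this
    have hpm : m ≤ p := by
      by_contra hc
      push_neg at hc
      have h2 : (j+1) * 2^(m-p) * 2^p = k * 2^p := by
        rw [mul_assoc, mul_comm (2^(m-p)) (2^p), ← mul_assoc, ← heqn, mul_assoc, ← pow_add]
        congr 2
        omega
      have h3 : (j+1) * 2^(m-p) = k :=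
        Nat.eq_of_mul_eq_mul_right (pow_pos (by norm_num) p) h2
      have : Even k := by
        rw [← h3]
        exact ((Nat.even_pow).mpr ⟨even_two, by omega⟩).mul_left _
      exact (Nat.not_even_iff_odd.mpr hk) this
    have hj1 : j + 1 = k * 2^(p-m) := by
      have h3 : (j+1) * 2^m = (k * 2^(p-m)) * 2^m := by
        rw [heqn, mul_assoc, ← pow_add]
        congr 2
        omega
      exact Nat.eq_of_mul_eq_mul_right (pow_pos (by norm_num) m) h3
    -- inner downward chain
    have inner : ∀ u : ℕ, u ≤ p - m →
        ∃ i' : Fin (n+1), i' < i₀.succ ∧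
          I.pts i' = ((k * 2^(p-m-u) - 1 : ℕ):ℚ)/2^(p-u) := by
      intro u
      induction u with
      | zero =>
        intro _
        refine ⟨i₀.castSucc, Fin.castSucc_lt_succ, ?_⟩
        have hjj : j = k * 2^(p-m-0) - 1 := by simp only [Nat.sub_zero]; omega
        rw [hl, hjj]
        simp
      | succ u IHu =>
        intro hu
        obtain ⟨iu, hiu, hptsu⟩ := IHu (by omega)
        have ht : 1 ≤ p - m - u := by omega
        set t := p - m - u with htdef
        have hKpos : 2 ≤ k * 2^t := by
          calc 2 = 1 * 2^1 := by norm_num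
          _ ≤ k * 2^t := Nat.mul_le_mul hkpos (Nat.pow_le_pow_right (by norm_num) ht)
        have hodd : Odd (k * 2^t - 1) := by
          have : Even (k * 2^t) := by
            rcases Nat.even_or_odd k with he | ho
            · exact he.mul_right _
            · exact (Even.mul_left (by
                have : Even (2^t) := (Nat.even_pow).mpr ⟨even_two, by omega⟩
                exact this) k)
          exact Nat.Even.sub_odd (by omega) this odd_one
        have hiuN : iu.1 ≤ N := by
          have := Fin.lt_iff_val_lt_val.mp hiu
          omega
        obtain ⟨i', hi', hpts'⟩ := IH iu hiuN (p-u) (k * 2^t - 1) hodd hptsu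
        refine ⟨i', lt_trans hi' hiu, ?_⟩
        rw [hpts']
        -- ((k*2^t - 1 : ℕ):ℚ) - 1)/2^(p-u) = ((k*2^(t-1) - 1 : ℕ):ℚ)/2^(p-u-1)
        have e1 : p - m - (u+1) = t - 1 := by omega
        have e2 : p - (u+1) = (p - u) - 1 := by omega
        have e3 : (1:ℕ) ≤ p - u := by omega
        have e4 : k * 2^t = 2 * (k * 2^(t-1)) := by
          conv_lhs => rw [show t = (t-1)+1 by omega]
          rw [pow_succ]; ring
        have hK1 : 1 ≤ k * 2^(t-1) := Nat.one_le_iff_ne_zero.mpr (by positivity)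
        rw [e1, e2]
        have c1 : ((k * 2^t - 1 : ℕ):ℚ) = 2 * ((k * 2^(t-1) : ℕ):ℚ) - 1 := by
          push_cast [Nat.cast_sub (by omega : 1 ≤ k * 2^t)]
          rw [show ((k:ℚ) * 2^t) = 2 * (k * 2^(t-1)) by exact_mod_cast congrArg (Nat.cast (R:=ℚ)) e4]
        have c2 : ((k * 2^(t-1) - 1 : ℕ):ℚ) = ((k * 2^(t-1) : ℕ):ℚ) - 1 := by
          push_cast [Nat.cast_sub hK1]; ring
        have c3 : (2:ℚ)^(p-u) = 2 * 2^(p-u-1) := by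
          rw [← pow_succ']; congr 1; omega
        rw [c1, c2, c3]
        have hpos : (0:ℚ) < 2^(p-u-1) := by positivity
        field_simp
        ring
    obtain ⟨i', hi', hpts'⟩ := inner (p - m) le_rfl
    refine ⟨i', hi', ?_⟩
    rw [hpts']
    have : p - (p - m) = m := by omega
    rw [this, show p - m - (p-m) = 0 by omega]
    have c : ((k * 2^0 - 1 : ℕ):ℚ) = (k:ℚ) - 1 := by
      have e : k * 2^0 - 1 = k - 1 := by simp
      rw [e, Nat.cast_sub (by omega)]
      push_cast <;> ring
    rw [c]


lemma pred_breakpoint {m k : ℕ} (hk : Odd k) {i : Fin (n+1)}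
    (h : I.pts i = (k:ℚ)/2^m) :
    ∃ i' : Fin (n+1), i' < i ∧ I.pts i' = ((k:ℚ)-1)/2^m :=
  I.pred_breakpoint_aux i.1 i le_rfl m k hk h

/-- The reflection of a standard dyadic partition. -/
def rev (I : SDPartition n) : SDPartition n where
  pts i := 1 - I.pts i.rev
  first := by
    show 1 - I.pts (0 : Fin (n+1)).rev = 0
    have : (0 : Fin (n+1)).rev = Fin.last n := by
      apply Fin.ext; simp [Fin.val_rev]
    rw [this, I.last]; ring
  last := by
    show 1 - I.pts (Fin.last n).rev = 1
    have : (Fin.last n).rev = 0 := by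
      apply Fin.ext; simp [Fin.val_rev]
    rw [this, I.first]; ring
  mono := by
    intro i j hij
    have : j.rev < i.rev := by
      rw [Fin.lt_iff_val_lt_val] at hij ⊢
      simp [Fin.val_rev]
      omega
    have := I.mono this
    show 1 - I.pts i.rev < 1 - I.pts j.rev
    linarith
  sd := by
    intro i
    have h1 : (i.castSucc : Fin (n+1)).rev = (i.rev : Fin n).succ := by
      apply Fin.ext; simp only [Fin.val_rev, Fin.val_succ, Fin.coe_castSucc]; omega
    have h2 : (i.succ : Fin (n+1)).rev = (i.rev : Fin n).castSucc := by
      apply Fin.ext; simp only [Fin.val_rev, Fin.val_succ, Fin.coe_castSucc]; omega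
    obtain ⟨m, k, hklt, hl, hr⟩ := I.sd i.rev
    refine ⟨m, 2^m - 1 - k, by omega, ?_, ?_⟩
    · show 1 - I.pts (i.castSucc).rev = _
      rw [h1, hr, Nat.cast_sub (by omega : k ≤ 2^m - 1), Nat.cast_sub (by omega : 1 ≤ 2^m)]
      have hpos : (0:ℚ) < 2^m := by positivity
      push_cast
      field_simp
      ring
    · show 1 - I.pts (i.succ).rev = _
      rw [h2, hl, Nat.cast_sub (by omega : k ≤ 2^m - 1), Nat.cast_sub (by omega : 1 ≤ 2^m)]
      have hpos : (0:ℚ) < 2^m := by positivity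
      push_cast
      field_simp
      ring

lemma succ_breakpoint {m k : ℕ} (hk : Odd k) (hklt : k < 2^m) {i : Fin (n+1)}
    (h : I.pts i = (k:ℚ)/2^m) :
    ∃ i' : Fin (n+1), i < i' ∧ I.pts i' = ((k:ℚ)+1)/2^m := by
  have hm : 1 ≤ m := by
    rcases Nat.eq_zero_or_pos m with rfl | h'
    · exfalso; rcases hk with ⟨a, ha⟩; omega
    · exact h'
  have hrev : I.rev.pts i.rev = ((2^m - k : ℕ):ℚ)/2^m := by
    show 1 - I.pts i.rev.rev = _
    rw [Fin.rev_rev, h, Nat.cast_sub (by omega)]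
    have hpos : (0:ℚ) < 2^m := by positivity
    push_cast
    field_simp
  have hodd : Odd (2^m - k) := by
    have : Even (2^m) := (Nat.even_pow).mpr ⟨even_two, by omega⟩
    exact Nat.Even.sub_odd (by omega) this hk
  obtain ⟨i', hlt, hpts⟩ := I.rev.pred_breakpoint hodd hrev
  refine ⟨i'.rev, ?_, ?_⟩
  · rw [Fin.lt_iff_val_lt_val] at hlt ⊢
    simp [Fin.val_rev] at hlt ⊢
    omega
  · have : I.rev.pts i' = 1 - I.pts i'.rev := rfl
    rw [this] at hpts
    have hpos : (0:ℚ) < 2^m := by positivity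
    rw [Nat.cast_sub (by omega)] at hpts
    push_cast at hpts
    have : I.pts i'.rev = 1 - ((2:ℚ)^m - k - 1)/2^m := by linarith
    rw [this]
    field_simp
    ring

end SDPartition

/-- No dyadic with exponent ≤ q lies strictly between `h/2^q` and `(h+1)/2^q`. -/
lemma exp_gt_of_strict_inside {h q d t : ℕ}
    (h1 : (h:ℚ)/2^q < (d:ℚ)/2^t) (h2 : (d:ℚ)/2^t < ((h:ℚ)+1)/2^q) : q < t := by
  by_contra hc
  push_neg at hc
  have n1 : h * 2^t < d * 2^q := dy_lt_iff.mp h1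
  have n2 : d * 2^q < (h+1) * 2^t := by
    have : (d:ℚ)/2^t < ((h+1:ℕ):ℚ)/2^q := by push_cast; exact h2
    exact dy_lt_iff.mp this
  have e : 2^q = 2^t * 2^(q-t) := by rw [← pow_add]; congr 1; omega
  rw [e] at n1 n2
  have p1 : h < d * 2^(q-t) := by
    have h' : h * 2^t < (d * 2^(q-t)) * 2^t := by
      calc h * 2^t < d * (2^t * 2^(q-t)) := n1
      _ = (d * 2^(q-t)) * 2^t := by ring
    exact Nat.lt_of_mul_lt_mul_right h'
  have p2 : d * 2^(q-t) < h + 1 := by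
    have h' : (d * 2^(q-t)) * 2^t < (h+1) * 2^t := by
      calc (d * 2^(q-t)) * 2^t = d * (2^t * 2^(q-t)) := by ring
      _ < (h+1) * 2^t := n2
    exact Nat.lt_of_mul_lt_mul_right h'
  omega

namespace SDPartition

variable {n : ℕ} (I : SDPartition n)

/-- If some breakpoint lies strictly inside the s.d. interval `[h/2^q, (h+1)/2^q]`,
then its midpoint is a breakpoint. -/
lemma mid_breakpoint_aux (P : ℕ) :
    ∀ t : ℕ, t ≤ P → ∀ c : ℕ, Odd c → ∀ q h : ℕ, h + 1 ≤ 2^q →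
      (∃ x : Fin (n+1), I.pts x = (c:ℚ)/2^t) →
      (h:ℚ)/2^q < (c:ℚ)/2^t → (c:ℚ)/2^t < ((h:ℚ)+1)/2^q →
      ∃ x : Fin (n+1), I.pts x = ((2*h+1 : ℕ):ℚ)/2^(q+1) := by
  induction P with
  | zero =>
    intro t ht c hc q h hh hx hlo hhi
    exfalso
    have := exp_gt_of_strict_inside hlo hhi
    omega
  | succ P IH =>
    intro t ht c hc q h hh ⟨x, hx⟩ hlo hhi
    have hqt : q < t := exp_gt_of_strict_inside hlo hhi
    have n1 : h * 2^t < c * 2^q := dy_lt_iff.mp hlo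
    have n2 : c * 2^q < (h+1) * 2^t := by
      have : (c:ℚ)/2^t < ((h+1:ℕ):ℚ)/2^q := by push_cast; exact hhi
      exact dy_lt_iff.mp this
    have e : 2^t = 2^(t-q) * 2^q := by rw [← pow_add]; congr 1; omega
    have q2pos : 0 < 2^q := pow_pos (by norm_num) q
    have n1' : h * 2^(t-q) < c := by
      rw [e] at n1
      have : h * 2^(t-q) * 2^q < c * 2^q := by
        calc h * 2^(t-q) * 2^q = h * (2^(t-q) * 2^q) := by ring
        _ < c * 2^q := n1
      exact Nat.lt_of_mul_lt_mul_right this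
    have n2' : c < (h+1) * 2^(t-q) := by
      rw [e] at n2
      have : c * 2^q < (h+1) * 2^(t-q) * 2^q := by
        calc c * 2^q < (h+1) * (2^(t-q) * 2^q) := n2
        _ = (h+1) * 2^(t-q) * 2^q := by ring
      exact Nat.lt_of_mul_lt_mul_right this
    rcases Nat.eq_or_lt_of_le (show q + 1 ≤ t by omega) with heq | hlt2
    · -- t = q+1 : c = 2h+1
      subst heq
      have : c = 2*h + 1 := by
        have e1 : 2^(q+1-q) = 2 := by simp
        rw [e1] at n1' n2'
        omega
      exact ⟨x, by rw [hx, this]⟩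
    · -- t ≥ q+2 : move to a neighbour breakpoint with smaller exponent
      have hclt : c < 2^t := by
        have : (h+1) * 2^(t-q) ≤ 2^q * 2^(t-q) := Nat.mul_le_mul_right _ hh
        rw [← pow_add] at this
        have e2 : q + (t-q) = t := by omega
        rw [e2] at this
        omega
      have hcpos : 0 < c := by
        rcases hc with ⟨a, ha⟩; omega
      -- choose the neighbour
      rcases Nat.lt_or_ge (h * 2^(t-q)) (c - 1) with hcase | hcase
      · -- use c - 1
        obtain ⟨x1, _, hx1⟩ := I.pred_breakpoint hc hx
        have hx1' : I.pts x1 = ((c - 1 : ℕ):ℚ)/2^t := by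
          rw [hx1, Nat.cast_sub (by omega)]; norm_num
        have hc1pos : c - 1 ≠ 0 := by omega
        obtain ⟨e', c', hc', hce⟩ := Nat.exists_eq_two_pow_mul_odd hc1pos
        have he1 : 1 ≤ e' := by
          rcases Nat.eq_zero_or_pos e' with rfl | h'
          · exfalso
            rw [pow_zero, one_mul] at hce
            rcases hc with ⟨a, ha⟩; rcases hc' with ⟨b, hb'⟩; omega
          · exact h'
        have hee : e' < t := by
          have hle : 2^e' ≤ c - 1 := by
            calc 2^e' = 2^e' * 1 := by ring
            _ ≤ 2^e' * c' := Nat.mul_le_mul_left _ (by rcases hc' with ⟨b, hb⟩; omega)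
            _ = c - 1 := hce.symm
          exact (Nat.pow_lt_pow_iff_right (by norm_num)).mp (lt_of_le_of_lt hle (by omega))
        have hval : ((c - 1 : ℕ):ℚ)/2^t = (c':ℚ)/2^(t-e') := by
          rw [dy_eq_iff]
          rw [hce]
          rw [show 2^e' * c' * 2^(t-e') = c' * (2^e' * 2^(t-e')) by ring, ← pow_add]
          congr 2
          omega
        have hlo' : (h:ℚ)/2^q < (c':ℚ)/2^(t-e') := by
          rw [← hval, dy_lt_iff]
          calc h * 2^t = h * 2^(t-q) * 2^q := by rw [e]; ring
          _ < (c-1) * 2^q := (Nat.mul_lt_mul_right q2pos).mpr hcase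
        have hhi' : (c':ℚ)/2^(t-e') < ((h:ℚ)+1)/2^q := by
          rw [← hval]
          have : ((c-1:ℕ):ℚ)/2^t < (c:ℚ)/2^t := by
            rw [dy_lt_iff]
            have : 0 < 2^t := pow_pos (by norm_num) t
            exact (Nat.mul_lt_mul_right this).mpr (by omega)
          linarith
        exact IH (t - e') (by omega) c' hc' q h hh ⟨x1, by rw [hx1', hval]⟩ hlo' hhi'
      · -- c = h * 2^(t-q) + 1 ; use c + 1
        have hceq : c = h * 2^(t-q) + 1 := by omega
        obtain ⟨x2, _, hx2⟩ := I.succ_breakpoint hc hclt hx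
        have hx2' : I.pts x2 = ((c + 1 : ℕ):ℚ)/2^t := by
          rw [hx2]; push_cast; ring_nf
        obtain ⟨e', c', hc', hce⟩ := Nat.exists_eq_two_pow_mul_odd (show c + 1 ≠ 0 by omega)
        have he1 : 1 ≤ e' := by
          rcases Nat.eq_zero_or_pos e' with rfl | h'
          · exfalso
            rw [pow_zero, one_mul] at hce
            rcases hc with ⟨a, ha⟩; rcases hc' with ⟨b, hb'⟩; omega
          · exact h'
        have hc1lt : c + 1 < (h+1) * 2^(t-q) := by
          have hX : (h+1) * 2^(t-q) = h * 2^(t-q) + 2^(t-q) := by ring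
          have h6 : 4 ≤ 2^(t-q) := by
            calc 4 = 2^2 := by norm_num
            _ ≤ 2^(t-q) := Nat.pow_le_pow_right (by norm_num) (by omega)
          omega
        have hee : e' < t := by
          have hle : 2^e' ≤ c + 1 := by
            calc 2^e' = 2^e' * 1 := by ring
            _ ≤ 2^e' * c' := Nat.mul_le_mul_left _ (by rcases hc' with ⟨b, hb⟩; omega)
            _ = c + 1 := hce.symm
          have hstrict : c + 1 < 2^t := by
            have h1 : (h+1) * 2^(t-q) ≤ 2^q * 2^(t-q) := Nat.mul_le_mul_right _ hh
            rw [← pow_add] at h1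
            have e2 : q + (t-q) = t := by omega
            rw [e2] at h1
            omega
          exact (Nat.pow_lt_pow_iff_right (by norm_num)).mp (lt_of_le_of_lt hle hstrict)
        have hval : ((c + 1 : ℕ):ℚ)/2^t = (c':ℚ)/2^(t-e') := by
          rw [dy_eq_iff, hce]
          rw [show 2^e' * c' * 2^(t-e') = c' * (2^e' * 2^(t-e')) by ring, ← pow_add]
          congr 2
          omega
        have hlo' : (h:ℚ)/2^q < (c':ℚ)/2^(t-e') := by
          rw [← hval, dy_lt_iff]
          calc h * 2^t = h * 2^(t-q) * 2^q := by rw [e]; ring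
          _ < (c+1) * 2^q := (Nat.mul_lt_mul_right q2pos).mpr (by omega)
        have hhi' : (c':ℚ)/2^(t-e') < ((h:ℚ)+1)/2^q := by
          rw [← hval]
          have : ((c+1:ℕ):ℚ)/2^t < ((h+1:ℕ):ℚ)/2^q := by
            rw [dy_lt_iff]
            calc (c+1) * 2^q < (h+1) * 2^(t-q) * 2^q := (Nat.mul_lt_mul_right q2pos).mpr hc1lt
            _ = (h+1) * 2^t := by rw [e]; ring
          push_cast at this
          linarith
        exact IH (t - e') (by omega) c' hc' q h hh ⟨x2, by rw [hx2', hval]⟩ hlo' hhi'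

end SDPartition


variable {n : ℕ} (I : SDPartition n)

lemma conj_eval {A : ℚ × ℚ} (h : ¬ IsLeftSD A.1 A.2) :
    conjSD A = (2*A.1 - A.2, A.1) := by
  simp only [conjSD]
  rw [if_neg h]

lemma join_eval {A : ℚ × ℚ} (h : ¬ IsLeftSD A.1 A.2) (hlr : A.1 ≤ A.2) :
    sdJoin A (conjSD A) = (2*A.1 - A.2, A.2) := by
  rw [conj_eval h]
  unfold sdJoin
  simp only
  rw [min_eq_right (by linarith), max_eq_left (by linarith)]

lemma right_rep {A : ℚ × ℚ} (hAright : IsRightSD A.1 A.2) (hAne : A ≠ ((0:ℚ), (1:ℚ))) :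
    ∃ m k : ℕ, 1 ≤ m ∧ k < 2^m ∧ Odd k ∧ A.1 = (k:ℚ)/2^m ∧ A.2 = ((k:ℚ)+1)/2^m := by
  rcases hAright with ⟨h0, h1⟩ | h
  · exact absurd (Prod.ext h0 h1) hAne
  · exact h

theorem statement_19_aux (s : ℚ × ℚ → ℤ) (hs : SignSpec s) :
    Set.BijOn (fun A => sdJoin A (conjSD A))
      {A | A ∈ SRIn I ∧ A ≠ ((0 : ℚ), (1 : ℚ)) ∧ s A = 1}
      {B | B ∈ SIn I ∧ s B = -1 ∧
        ¬ ∃ i : Fin n, B = (I.pts i.castSucc, I.pts i.succ)} := by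
  obtain ⟨hs1, hs2, hs3⟩ := hs
  refine ⟨?_, ?_, ?_⟩
  · -- MapsTo
    rintro A ⟨⟨⟨⟨i, j, hij, hAeq⟩, hASD⟩, hAright⟩, hAne, hsA⟩
    obtain ⟨m, k, hm, hklt, hkodd, hl, hr⟩ := right_rep hAright hAne
    have hne' : ¬(A.1 = 0 ∧ A.2 = 1) := by
      rintro ⟨h0, h1⟩; exact hAne (Prod.ext h0 h1)
    have hnotleft : ¬ IsLeftSD A.1 A.2 := right_not_left hAright hne'
    have h2pos : (0:ℚ) < 2^m := by positivity
    have hlr : A.1 < A.2 := by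
      rw [hl, hr, div_lt_div_iff₀ h2pos h2pos]
      nlinarith
    have hfA : sdJoin A (conjSD A) = (2*A.1 - A.2, A.2) := join_eval hnotleft hlr.le
    have hB1 : 2*A.1 - A.2 = ((k:ℚ)-1)/2^m := by rw [hl, hr]; ring
    have hpi : I.pts i = A.1 := by rw [hAeq]
    have hpj : I.pts j = A.2 := by rw [hAeq]
    obtain ⟨i', hi', hpi'⟩ := I.pred_breakpoint hkodd (by rw [hpi, hl])
    obtain ⟨a, ha⟩ := hkodd
    have h2m : (2:ℕ)^m = 2 * 2^(m-1) := by
      conv_lhs => rw [show m = (m-1)+1 by omega]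
      rw [pow_succ]; ring
    have h2mq : (2:ℚ)^m = 2 * 2^(m-1) := by exact_mod_cast congrArg (Nat.cast (R:=ℚ)) h2m
    simp only [Set.mem_setOf_eq]
    rw [hfA]
    refine ⟨⟨⟨i', j, lt_trans hi' hij, ?_⟩, ?_⟩, ?_, ?_⟩
    · apply Prod.ext
      · show 2*A.1 - A.2 = I.pts i'
        rw [hpi', hB1]
      · exact hpj.symm
    · -- IsSD (2A.1 - A.2) A.2
      refine ⟨m-1, a, by omega, ?_, ?_⟩
      · show 2*A.1 - A.2 = _
        rw [hB1]
        rw [div_eq_div_iff (by positivity) (by positivity)]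
        push_cast [ha]
        rw [h2mq]
        ring
      · show A.2 = _
        rw [hr, div_eq_div_iff (by positivity) (by positivity)]
        push_cast [ha]
        rw [h2mq]
        ring
    · -- sign
      have := (hs3 A hASD hAne).2 hAright
      rw [hfA] at this
      omega
    · -- not a subinterval
      rintro ⟨c, hc⟩
      rw [Prod.mk.injEq] at hc
      obtain ⟨hc1, hc2⟩ := hc
      have e1 : c.castSucc = i' := I.mono.injective (by rw [← hc1, hpi', hB1])
      have e2 : c.succ = j := I.mono.injective (by rw [← hc2, hpj])
      have v1 : c.1 = i'.1 := by rw [← e1]; simp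
      have v2 : c.1 + 1 = j.1 := by rw [← e2]; rfl
      have : i'.1 < i.1 := hi'
      have : i.1 < j.1 := hij
      omega
  · -- InjOn
    rintro A ⟨⟨_, hAright⟩, hAne, -⟩ A' ⟨⟨_, hA'right⟩, hA'ne, -⟩ heq
    obtain ⟨m, k, hm, hklt, hkodd, hl, hr⟩ := right_rep hAright hAne
    obtain ⟨m', k', hm', hklt', hkodd', hl', hr'⟩ := right_rep hA'right hA'ne
    have hnotleft : ¬ IsLeftSD A.1 A.2 := right_not_left hAright
      (by rintro ⟨h0, h1⟩; exact hAne (Prod.ext h0 h1))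
    have hnotleft' : ¬ IsLeftSD A'.1 A'.2 := right_not_left hA'right
      (by rintro ⟨h0, h1⟩; exact hA'ne (Prod.ext h0 h1))
    have hlr : A.1 < A.2 := by
      rw [hl, hr, div_lt_div_iff₀ (by positivity) (by positivity)]
      nlinarith [pow_pos (show (0:ℚ) < 2 by norm_num) m]
    have hlr' : A'.1 < A'.2 := by
      rw [hl', hr', div_lt_div_iff₀ (by positivity) (by positivity)]
      nlinarith [pow_pos (show (0:ℚ) < 2 by norm_num) m']
    have e1 := join_eval hnotleft hlr.le
    have e2 := join_eval hnotleft' hlr'.le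
    simp only at heq
    rw [e1, e2, Prod.mk.injEq] at heq
    obtain ⟨q1, q2⟩ := heq
    apply Prod.ext <;> [skip; exact q2]
    linarith
  · -- SurjOn
    rintro B ⟨⟨⟨i, j, hij, hBeq⟩, hBSD⟩, hsB, hnsub⟩
    obtain ⟨q, h, hhlt, hB1, hB2⟩ := hBSD
    have hq : 1 ≤ q := by
      by_contra hc
      push_neg at hc
      interval_cases q
      · have hh0 : h = 0 := by omega
        have : B = ((0:ℚ), (1:ℚ)) := by
          apply Prod.ext
          · rw [hB1, hh0]; norm_num
          · rw [hB2, hh0]; norm_num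
        rw [this, hs2] at hsB
        omega
    have hpi : I.pts i = B.1 := by rw [hBeq]
    have hpj : I.pts j = B.2 := by rw [hBeq]
    have hijv : i.1 < j.1 := hij
    have hjn : j.1 ≤ n := Nat.lt_succ_iff.mp j.2
    have h2 : i.1 + 2 ≤ j.1 := by
      by_contra hc
      push_neg at hc
      have hj1 : j.1 = i.1 + 1 := by omega
      apply hnsub
      refine ⟨⟨i.1, by omega⟩, ?_⟩
      have ec : (⟨i.1, by omega⟩ : Fin n).castSucc = i := by apply Fin.ext; rfl
      have es : (⟨i.1, by omega⟩ : Fin n).succ = j := by apply Fin.ext; simp [Fin.val_succ]; omega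
      rw [ec, es]
      exact hBeq
    -- the inner breakpoint
    set x : Fin (n+1) := ⟨i.1 + 1, by omega⟩ with hxdef
    have hxlo : I.pts i < I.pts x := I.mono (by simp [Fin.lt_iff_val_lt_val, hxdef])
    have hxhi : I.pts x < I.pts j := I.mono (by simp [Fin.lt_iff_val_lt_val, hxdef]; omega)
    set c0 : Fin n := ⟨i.1 + 1, by omega⟩ with hc0def
    have hxc : c0.castSucc = x := by apply Fin.ext; rfl
    obtain ⟨w, d, hdlt, hdl, hdr⟩ := I.sd c0
    rw [hxc] at hdl
    have hdpos : 0 < d := by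
      rcases Nat.eq_zero_or_pos d with rfl | h'
      · exfalso
        have : I.pts x = 0 := by rw [hdl]; norm_num
        have h0le : (0:ℚ) ≤ I.pts i := I.pts_nonneg i
        rw [this] at hxlo
        linarith
      · exact h'
    obtain ⟨e', c', hc'odd, hce⟩ := Nat.exists_eq_two_pow_mul_odd (show d ≠ 0 by omega)
    have hee : e' < w := by
      have hle : 2^e' ≤ d := by
        calc 2^e' = 2^e' * 1 := by ring
        _ ≤ 2^e' * c' := Nat.mul_le_mul_left _ (by rcases hc'odd with ⟨b, hb⟩; omega)
        _ = d := hce.symm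
      exact (Nat.pow_lt_pow_iff_right (by norm_num)).mp (lt_of_le_of_lt hle hdlt)
    have hxval : I.pts x = (c':ℚ)/2^(w-e') := by
      rw [hdl, dy_eq_iff, hce]
      rw [show 2^e' * c' * 2^(w-e') = c' * (2^e' * 2^(w-e')) by ring, ← pow_add]
      congr 2
      omega
    have hlo : (h:ℚ)/2^q < (c':ℚ)/2^(w-e') := by rw [← hxval, ← hB1, ← hpi]; exact hxlo
    have hhi : (c':ℚ)/2^(w-e') < ((h:ℚ)+1)/2^q := by rw [← hxval, ← hB2, ← hpj]; exact hxhi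
    obtain ⟨y, hy⟩ := I.mid_breakpoint_aux (w-e') (w-e') le_rfl c' hc'odd q h (by omega)
      ⟨x, hxval⟩ hlo hhi
    -- A := (pts y, pts j)
    have hq2pos : (0:ℚ) < 2^(q+1) := by positivity
    have hqpos : (0:ℚ) < 2^q := by positivity
    have h2q : (2:ℚ)^(q+1) = 2 * 2^q := by rw [pow_succ]; ring
    have hyval : I.pts y = ((2*h+1 : ℕ):ℚ)/2^(q+1) := hy
    have hpjval : I.pts j = ((h:ℚ)+1)/2^q := by rw [hpj, hB2]
    have hyj : y < j := by
      rw [← I.mono.lt_iff_lt]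
      rw [hyval, hpjval, div_lt_div_iff₀ hq2pos hqpos]
      push_cast
      rw [h2q]
      ring_nf
      nlinarith [hqpos]
    set A : ℚ × ℚ := (I.pts y, I.pts j) with hAdef
    have hA1 : A.1 = ((2*h+1 : ℕ):ℚ)/2^(q+1) := hyval
    have hA2 : A.2 = ((h:ℚ)+1)/2^q := hpjval
    have hA1' : A.1 = ((2*h+1 : ℕ):ℚ)/2^(q+1) := hA1
    have hASD : IsSD A.1 A.2 := by
      refine ⟨q+1, 2*h+1, by omega, hA1, ?_⟩
      rw [hA2, div_eq_div_iff (by positivity) (by positivity)]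
      push_cast
      rw [h2q]
      ring
    have hAright : IsRightSD A.1 A.2 := by
      refine Or.inr ⟨q+1, 2*h+1, by omega, by omega, ⟨h, by ring⟩, ?_, ?_⟩
      · exact hA1
      · rw [hA2, div_eq_div_iff (by positivity) (by positivity)]
        push_cast
        rw [h2q]
        ring
    have hApos : (0:ℚ) < A.1 := by
      rw [hA1]
      positivity
    have hAne : A ≠ ((0:ℚ), (1:ℚ)) := by
      intro hcontra
      rw [Prod.ext_iff] at hcontra
      rw [hcontra.1] at hApos
      exact lt_irrefl _ hApos
    have hnotleft : ¬ IsLeftSD A.1 A.2 := right_not_left hAright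
      (by rintro ⟨h0, h1⟩; exact hAne (Prod.ext h0 h1))
    have hlrA : A.1 < A.2 := by
      rw [hA1, hA2, div_lt_div_iff₀ hq2pos hqpos]
      push_cast
      rw [h2q]
      nlinarith [hqpos]
    have hfA : sdJoin A (conjSD A) = (2*A.1 - A.2, A.2) := join_eval hnotleft hlrA.le
    have hfAB : sdJoin A (conjSD A) = B := by
      rw [hfA]
      apply Prod.ext
      · show 2*A.1 - A.2 = B.1
        rw [hA1, hA2, hB1]
        push_cast
        rw [h2q]
        field_simp
        ring
      · show A.2 = B.2
        rw [hA2, hB2]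
    refine ⟨A, ⟨⟨⟨⟨y, j, hyj, rfl⟩, hASD⟩, hAright⟩, hAne, ?_⟩, hfAB⟩
    have := (hs3 A hASD hAne).2 hAright
    rw [hfAB] at this
    omega


end Aux

/-- the map `A ↦ A ∪ Ā` is a bijection from
`{A ∈ S_R(I) : A ≠ [0,1], s A = +1}` onto
`{B ∈ S(I) : s B = -1 and B is not a subinterval of I}`. -/
theorem statement_19 {n : ℕ} (I : SDPartition n) (s : ℚ × ℚ → ℤ)
    (hs : SignSpec s) :
    Set.BijOn (fun A => sdJoin A (conjSD A))
      {A | A ∈ SRIn I ∧ A ≠ ((0 : ℚ), (1 : ℚ)) ∧ s A = 1}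
      {B | B ∈ SIn I ∧ s B = -1 ∧
        ¬ ∃ i : Fin n, B = (I.pts i.castSucc, I.pts i.succ)} := by
  exact statement_19_aux I s hs
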